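/- Let g be a positive-definite real symmetric 3×3 matrix, and let A and B be real symmetric 3×3 matrices. Define the g-inner product of symmetric matrices by ⟨A,B⟩_g = tr(g⁻¹·A·g⁻¹·B), the g-norm by ‖A‖_g² = ⟨A,A⟩_g, the g-traces R = tr(g⁻¹·A) and H = tr(g⁻¹·B), and the contraction ⟨A,B²⟩_g = tr(g⁻¹·A·g⁻¹·B·g⁻¹·B). Then ‖B‖_g²·‖A‖_g² − 2·R·H·⟨A,B⟩_g + 2·R·⟨A,B²⟩_g + (1/2)·R²·(H² − ‖B‖_g²) ≥ 0. -/

import Mathlib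

open Matrix

lemma diag6 (a1 a2 a3 b1 b2 b3 : ℝ) :
    0 ≤ (b1^2+b2^2+b3^2)*(a1^2+a2^2+a3^2)
      - 2*(a1+a2+a3)*(b1+b2+b3)*(a1*b1+a2*b2+a3*b3)
      + 2*(a1+a2+a3)*(a1*b1^2+a2*b2^2+a3*b3^2)
      + (1/2)*(a1+a2+a3)^2*((b1+b2+b3)^2-(b1^2+b2^2+b3^2)) := by
  nlinarith [sq_nonneg (2*a1*b1 - a1*b2 - a1*b3 - a2*b2 + a2*b3 + a3*b2 - a3*b3),
    sq_nonneg (3*a1*b2 + a1*b3 - 2*a2*b1 - a2*b2 - a2*b3 - 2*a3*b1 + a3*b2 + a3*b3),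
    sq_nonneg (2*a1*b3 - a2*b1 + a2*b2 + a2*b3 - a3*b1 - a3*b2 - a3*b3),
    sq_nonneg (a2*b1 - a2*b2 + a2*b3 - a3*b1 - a3*b2 + a3*b3)]

lemma diagMat (A : Matrix (Fin 3) (Fin 3) ℝ) (hA : A.IsSymm) (b : Fin 3 → ℝ) :
    0 ≤ ((diagonal b)*(diagonal b)).trace * (A*A).trace
      - 2 * A.trace * (diagonal b).trace * (A*(diagonal b)).trace
      + 2 * A.trace * (A*(diagonal b)*(diagonal b)).trace
      + (1/2) * A.trace^2 * ((diagonal b).trace^2 - ((diagonal b)*(diagonal b)).trace) := by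
  have h10 := hA.apply 0 1
  have h20 := hA.apply 0 2
  have h21 := hA.apply 1 2
  simp only [Matrix.trace_fin_three, Matrix.mul_apply, Fin.sum_univ_three,
    Matrix.diagonal, Matrix.of_apply]
  norm_num [Fin.ext_iff, h10, h20, h21]
  nlinarith [diag6 (A 0 0) (A 1 1) (A 2 2) (b 0) (b 1) (b 2),
    sq_nonneg (b 0 * A 0 1), sq_nonneg (b 1 * A 0 1), sq_nonneg (b 2 * A 0 1),
    sq_nonneg (b 0 * A 0 2), sq_nonneg (b 1 * A 0 2), sq_nonneg (b 2 * A 0 2),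
    sq_nonneg (b 0 * A 1 2), sq_nonneg (b 1 * A 1 2), sq_nonneg (b 2 * A 1 2)]

lemma symMat (A B : Matrix (Fin 3) (Fin 3) ℝ) (hA : A.IsSymm) (hB : B.IsSymm) :
    0 ≤ (B*B).trace * (A*A).trace - 2*A.trace*B.trace*(A*B).trace
      + 2*A.trace*(A*B*B).trace + (1/2)*A.trace^2*(B.trace^2-(B*B).trace) := by
  have hB' : B.IsHermitian := by
    rw [Matrix.IsHermitian, Matrix.conjTranspose_eq_transpose_of_trivial]; exact hB
  set U : Matrix (Fin 3) (Fin 3) ℝ := (hB'.eigenvectorUnitary : Matrix (Fin 3) (Fin 3) ℝ) with hUdef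
  have hU1 : star U * U = 1 := Unitary.coe_star_mul_self _
  have hU2 : U * star U = 1 := Unitary.coe_mul_star_self _
  set b : Fin 3 → ℝ := RCLike.ofReal ∘ hB'.eigenvalues with hbdef
  have hspec : B = U * diagonal b * star U := hB'.spectral_theorem
  have k1 : ∀ X : Matrix (Fin 3) (Fin 3) ℝ, star U * (U * X) = X := fun X => by
    rw [← Matrix.mul_assoc, hU1, Matrix.one_mul]
  have k2 : ∀ X : Matrix (Fin 3) (Fin 3) ℝ, U * (star U * X) = X := fun X => by
    rw [← Matrix.mul_assoc, hU2, Matrix.one_mul]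
  have trc1 : ∀ X : Matrix (Fin 3) (Fin 3) ℝ, (star U * X * U).trace = X.trace := fun X => by
    rw [Matrix.trace_mul_comm, ← Matrix.mul_assoc, hU2, Matrix.one_mul]
  have trc2 : ∀ X : Matrix (Fin 3) (Fin 3) ℝ, (U * X * star U).trace = X.trace := fun X => by
    rw [Matrix.trace_mul_comm, ← Matrix.mul_assoc, hU1, Matrix.one_mul]
  have hsU : star U = Uᵀ := by
    rw [Matrix.star_eq_conjTranspose, Matrix.conjTranspose_eq_transpose_of_trivial]
  have hA2 : (star U * A * U).IsSymm := by
    show (star U * A * U)ᵀ = star U * A * U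
    rw [hsU, Matrix.transpose_mul, Matrix.transpose_mul, Matrix.transpose_transpose, hA,
      Matrix.mul_assoc]
  have e1 : A.trace = (star U * A * U).trace := (trc1 A).symm
  have e2 : (A*A).trace = ((star U * A * U)*(star U * A * U)).trace := by
    rw [show (star U * A * U)*(star U * A * U) = star U * (A*A) * U by
      simp only [Matrix.mul_assoc, k2], trc1]
  have e3 : B.trace = (diagonal b).trace := by rw [hspec, trc2]
  have e4 : (B*B).trace = ((diagonal b)*(diagonal b)).trace := by
    rw [show B*B = U * ((diagonal b)*(diagonal b)) * star U by
      rw [hspec]; simp only [Matrix.mul_assoc, k1], trc2]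
  have e5 : (A*B).trace = ((star U * A * U)*(diagonal b)).trace := by
    rw [hspec, show A * (U * diagonal b * star U) = U * ((star U * A * U) * diagonal b) * star U by
      simp only [Matrix.mul_assoc, k2], trc2]
  have e6 : (A*B*B).trace = ((star U * A * U)*(diagonal b)*(diagonal b)).trace := by
    rw [show A*B*B = U * ((star U * A * U)*(diagonal b)*(diagonal b)) * star U by
      rw [hspec]; simp only [Matrix.mul_assoc, k2, k1], trc2]
  rw [e1, e2, e3, e4, e5, e6]
  exact diagMat (star U * A * U) hA2 b

open Matrix in
theorem stmt_1 (g A B : Matrix (Fin 3) (Fin 3) ℝ)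
    (hg : g.PosDef) (hgs : g.IsSymm) (hA : A.IsSymm) (hB : B.IsSymm) :
    (g⁻¹ * B * g⁻¹ * B).trace * (g⁻¹ * A * g⁻¹ * A).trace
      - 2 * (g⁻¹ * A).trace * (g⁻¹ * B).trace * (g⁻¹ * A * g⁻¹ * B).trace
      + 2 * (g⁻¹ * A).trace * (g⁻¹ * A * g⁻¹ * B * g⁻¹ * B).trace
      + (1 / 2) * (g⁻¹ * A).trace ^ 2
          * ((g⁻¹ * B).trace ^ 2 - (g⁻¹ * B * g⁻¹ * B).trace) ≥ 0 := by
  obtain ⟨Q, hQ⟩ : ∃ Q : Matrix (Fin 3) (Fin 3) ℝ, g⁻¹ = Qᴴ * Q := by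
    open scoped MatrixOrder Matrix.Norms.L2Operator in
    exact CStarAlgebra.nonneg_iff_eq_star_mul_self.mp hg.inv.posSemidef.nonneg
  rw [Matrix.conjTranspose_eq_transpose_of_trivial] at hQ
  have hA1 : (Q * A * Qᵀ).IsSymm := by
    show (Q * A * Qᵀ)ᵀ = Q * A * Qᵀ
    rw [Matrix.transpose_mul, Matrix.transpose_mul, Matrix.transpose_transpose, hA,
      Matrix.mul_assoc]
  have hB1 : (Q * B * Qᵀ).IsSymm := by
    show (Q * B * Qᵀ)ᵀ = Q * B * Qᵀ
    rw [Matrix.transpose_mul, Matrix.transpose_mul, Matrix.transpose_transpose, hB,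
      Matrix.mul_assoc]
  have ct : ∀ X : Matrix (Fin 3) (Fin 3) ℝ, (Qᵀ * Q * X).trace = (Q * X * Qᵀ).trace :=
    fun X => by rw [Matrix.mul_assoc, Matrix.trace_mul_comm]
  have e1 : (g⁻¹ * A).trace = (Q * A * Qᵀ).trace := by rw [hQ, ct]
  have e2 : (g⁻¹ * B).trace = (Q * B * Qᵀ).trace := by rw [hQ, ct]
  have e3 : (g⁻¹ * A * g⁻¹ * A).trace = ((Q * A * Qᵀ) * (Q * A * Qᵀ)).trace := by
    rw [hQ, show Qᵀ * Q * A * (Qᵀ * Q) * A = Qᵀ * Q * (A * (Qᵀ * Q) * A) by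
      simp only [Matrix.mul_assoc], ct]
    congr 1
    simp only [Matrix.mul_assoc]
  have e4 : (g⁻¹ * B * g⁻¹ * B).trace = ((Q * B * Qᵀ) * (Q * B * Qᵀ)).trace := by
    rw [hQ, show Qᵀ * Q * B * (Qᵀ * Q) * B = Qᵀ * Q * (B * (Qᵀ * Q) * B) by
      simp only [Matrix.mul_assoc], ct]
    congr 1
    simp only [Matrix.mul_assoc]
  have e5 : (g⁻¹ * A * g⁻¹ * B).trace = ((Q * A * Qᵀ) * (Q * B * Qᵀ)).trace := by
    rw [hQ, show Qᵀ * Q * A * (Qᵀ * Q) * B = Qᵀ * Q * (A * (Qᵀ * Q) * B) by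
      simp only [Matrix.mul_assoc], ct]
    congr 1
    simp only [Matrix.mul_assoc]
  have e6 : (g⁻¹ * A * g⁻¹ * B * g⁻¹ * B).trace
      = ((Q * A * Qᵀ) * (Q * B * Qᵀ) * (Q * B * Qᵀ)).trace := by
    rw [hQ, show Qᵀ * Q * A * (Qᵀ * Q) * B * (Qᵀ * Q) * B
        = Qᵀ * Q * (A * (Qᵀ * Q) * B * (Qᵀ * Q) * B) by simp only [Matrix.mul_assoc], ct]
    congr 1
    simp only [Matrix.mul_assoc]
  rw [ge_iff_le, e1, e2, e3, e4, e5, e6]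
  exact symMat (Q * A * Qᵀ) (Q * B * Qᵀ) hA1 hB1
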